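/- Let ζ ∈ ℂ be a primitive 3rd root of unity and define Q : ℤ³ → ℂ by Q(m₁,m₂,m₃) = (−1)^(m₁² + m₂² + m₃² + m₁m₂) · ζ^(m₂m₃). Then for S = {(1,0,0), (0,1,0), (0,0,1), (1,1,0), (0,1,1), (1,1,1), (1,2,1), (1,2,2), (1,3,2), (2,3,2), (2,4,3)}, every Q(α) with α ∈ S is a root of unity, and the product over α ∈ S of the multiplicative order of Q(α) equals 2⁸·3⁴ = 20736. -/

import Mathlib

theorem stmt_17 (ζ : ℂ) (hζ : IsPrimitiveRoot ζ 3)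
    (Q : ℤ × ℤ × ℤ → ℂ) (hQ : ∀ m1 m2 m3 : ℤ, Q (m1, m2, m3) = (-1 : ℂ) ^ (m1^2 + m2^2 + m3^2 + m1*m2) * ζ ^ (m2*m3))
    (S : Finset (ℤ × ℤ × ℤ)) (hS : S = {(1,0,0), (0,1,0), (0,0,1), (1,1,0), (0,1,1), (1,1,1), (1,2,1), (1,2,2), (1,3,2), (2,3,2), (2,4,3)}) :
    (∀ α ∈ S, IsOfFinOrder (Q α)) ∧ ∏ α ∈ S, orderOf (Q α) = 2^8 * 3^4 := by
  have hz3 : ζ ^ (3:ℕ) = 1 := hζ.pow_eq_one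
  have hznz : ζ ≠ 0 := hζ.ne_zero (by norm_num)
  have hz3' : ζ ^ (3:ℤ) = 1 := by rw [zpow_ofNat]; exact hz3
  have hQ100 : Q (1,0,0) = -1 := by rw [hQ]; norm_num
  have hQ010 : Q (0,1,0) = -1 := by rw [hQ]; norm_num
  have hQ001 : Q (0,0,1) = -1 := by rw [hQ]; norm_num
  have hQ110 : Q (1,1,0) = -1 := by rw [hQ]; norm_num
  have hQ011 : Q (0,1,1) = ζ := by rw [hQ]; norm_num
  have hQ111 : Q (1,1,1) = ζ := by rw [hQ]; norm_num
  have hQ121 : Q (1,2,1) = ζ^2 := by rw [hQ]; norm_num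
  have hQ122 : Q (1,2,2) = -ζ := by
    rw [hQ]; norm_num
    rw [show (4:ℕ) = 3 + 1 by norm_num, pow_add, hz3, pow_one, one_mul]
  have hQ132 : Q (1,3,2) = -1 := by
    rw [hQ]; norm_num
    rw [show (6:ℕ) = 3 * 2 by norm_num, pow_mul, hz3, one_pow]
  have hQ232 : Q (2,3,2) = -1 := by
    rw [hQ]; norm_num
    rw [show (6:ℕ) = 3 * 2 by norm_num, pow_mul, hz3, one_pow]
  have hQ243 : Q (2,4,3) = -1 := by
    rw [hQ]; norm_num
    rw [show (12:ℕ) = 3 * 4 by norm_num, pow_mul, hz3, one_pow]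
  have hone : orderOf (-1 : ℂ) = 2 := by
    rw [orderOf_neg_one]; simp [ringChar.eq_zero]
  have hord : orderOf ζ = 3 := hζ.eq_orderOf.symm
  have hord2 : orderOf (ζ^2) = 3 := ((hζ.pow_of_coprime 2 (by norm_num)).eq_orderOf).symm
  have hordneg : orderOf (-ζ) = 6 := by
    have hc : Commute (-1:ℂ) ζ := Commute.all _ _
    have := hc.orderOf_mul_eq_mul_orderOf_of_coprime (by rw [hone, hord]; norm_num)
    rw [← neg_one_mul, this, hone, hord]
  subst hS
  constructor
  · intro α hα
    fin_cases hα <;>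
      simp only [hQ100, hQ010, hQ001, hQ110, hQ011, hQ111, hQ121, hQ122, hQ132, hQ232, hQ243] <;>
      first
      | exact orderOf_pos_iff.mp (by rw [hone]; norm_num)
      | exact orderOf_pos_iff.mp (by rw [hord]; norm_num)
      | exact orderOf_pos_iff.mp (by rw [hord2]; norm_num)
      | exact orderOf_pos_iff.mp (by rw [hordneg]; norm_num)
  · rw [Finset.prod_insert (by decide), Finset.prod_insert (by decide),
      Finset.prod_insert (by decide), Finset.prod_insert (by decide),
      Finset.prod_insert (by decide), Finset.prod_insert (by decide),
      Finset.prod_insert (by decide), Finset.prod_insert (by decide),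
      Finset.prod_insert (by decide), Finset.prod_insert (by decide),
      Finset.prod_singleton]
    rw [hQ100, hQ010, hQ001, hQ110, hQ011, hQ111, hQ121, hQ122, hQ132, hQ232, hQ243,
      hone, hord, hord2, hordneg]
    norm_num
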